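/- arXiv:2009.00778 — 7 statements merged into one kernel-verified Lean document; each statement's English description precedes it below -/
import Mathlib

section
/- Assume in addition that V is 4-dimensional and −1 < p < 1. Then for every unit vector Z ∈ V, the four vectors Z, IZ, JZ, KZ form a basis of V. -/
open scoped RealInnerProductSpace

/-- If in addition `V` is 4-dimensional and `-1 < p < 1`, then for every
unit vector `Z`, the four vectors `Z, IZ, JZ, KZ` form a basis of `V`. -/
theorem gk_frame_basis {V : Type*} [NormedAddCommGroup V] [InnerProductSpace ℝ V]
    [FiniteDimensional ℝ V] (hdim : Module.finrank ℝ V = 4)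
    (p : ℝ) (hp1 : -1 < p) (hp2 : p < 1) (I J K : Module.End ℝ V)
    (hIiso : ∀ u v : V, ⟪I u, I v⟫ = ⟪u, v⟫)
    (hJiso : ∀ u v : V, ⟪J u, J v⟫ = ⟪u, v⟫)
    (hI : I * I = -1) (hJ : J * J = -1)
    (hIJ : I * J + J * I = (-(2 * p)) • (1 : Module.End ℝ V))
    (hK : K = (1 / 2 : ℝ) • (I * J - J * I)) :
    ∀ Z : V, ‖Z‖ = 1 →
      LinearIndependent ℝ ![Z, I Z, J Z, K Z] ∧
      Submodule.span ℝ (Set.range ![Z, I Z, J Z, K Z]) = ⊤ := by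
  intro Z hZ
  have hII : ∀ w : V, I (I w) = -w := by
    intro w
    have := LinearMap.congr_fun hI w
    simpa [Module.End.mul_apply] using this
  have hJJ : ∀ w : V, J (J w) = -w := by
    intro w
    have := LinearMap.congr_fun hJ w
    simpa [Module.End.mul_apply] using this
  have hac : I (J Z) + J (I Z) = (-(2 * p)) • Z := by
    have := LinearMap.congr_fun hIJ Z
    simpa [Module.End.mul_apply] using this
  have hKZ : K Z = (1/2 : ℝ) • (I (J Z) - J (I Z)) := by
    rw [hK]
    simp [Module.End.mul_apply]
  have hZZ : ⟪Z, Z⟫ = 1 := by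
    have := real_inner_self_eq_norm_sq Z
    rw [hZ] at this; simpa using this
  -- skew-symmetry
  have skewI : ∀ w : V, ⟪w, I w⟫ = 0 := by
    intro w
    have h := hIiso w (I w)
    rw [hII, inner_neg_right, real_inner_comm] at h
    linarith
  have skewJ : ∀ w : V, ⟪w, J w⟫ = 0 := by
    intro w
    have h := hJiso w (J w)
    rw [hJJ, inner_neg_right, real_inner_comm] at h
    linarith
  -- Gram entries
  have e1 : ⟪I Z, J Z⟫ = -⟪Z, I (J Z)⟫ := by
    have h := hIiso (I Z) (J Z)
    rw [hII, inner_neg_left] at h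
    linarith
  have e2 : ⟪I Z, J Z⟫ = -⟪Z, J (I Z)⟫ := by
    have h := hJiso (I Z) (J Z)
    rw [hJJ, inner_neg_right, real_inner_comm Z (J (I Z))] at h
    linarith
  have hIZJZ : ⟪I Z, J Z⟫ = p := by
    have h : ⟪Z, I (J Z) + J (I Z)⟫ = -(2*p) := by
      rw [hac, real_inner_smul_right, hZZ]; ring
    rw [inner_add_right] at h
    linarith
  have hZIJZ : ⟪Z, I (J Z)⟫ = -p := by linarith
  have hZJIZ : ⟪Z, J (I Z)⟫ = -p := by linarith
  have hZKZ : ⟪Z, K Z⟫ = 0 := by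
    rw [hKZ, real_inner_smul_right, inner_sub_right, hZIJZ, hZJIZ]; ring
  have hIZKZ : ⟪I Z, K Z⟫ = 0 := by
    rw [hKZ, real_inner_smul_right, inner_sub_right, hIiso Z (J Z), skewJ (I Z),
      skewJ Z]
    ring
  have hJZKZ : ⟪J Z, K Z⟫ = 0 := by
    rw [hKZ, real_inner_smul_right, inner_sub_right]
    have h1 : ⟪J Z, I (J Z)⟫ = 0 := skewI (J Z)
    have h2 : ⟪J Z, J (I Z)⟫ = 0 := by rw [hJiso Z (I Z), skewI Z]
    rw [h1, h2]; ring
  have hIJJI : ⟪I (J Z), J (I Z)⟫ = 2*p^2 - 1 := by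
    have hx : I (J Z) = (-(2 * p)) • Z - J (I Z) := by
      rw [← hac]; abel
    rw [hx, inner_sub_left, real_inner_smul_left,
      hZJIZ, hJiso (I Z) (I Z), hIiso Z Z, hZZ]
    ring
  have hKK : ⟪K Z, K Z⟫ = 1 - p^2 := by
    rw [hKZ, real_inner_smul_left, real_inner_smul_right, inner_sub_left,
      inner_sub_right, inner_sub_right, hIiso (J Z) (J Z), hJiso (I Z) (I Z),
      hJiso Z Z, hIiso Z Z, hZZ, hIJJI, real_inner_comm (I (J Z)) (J (I Z)), hIJJI]
    ring
  have hpsq : p^2 < 1 := by nlinarith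
  have hli : LinearIndependent ℝ ![Z, I Z, J Z, K Z] := by
    rw [Fintype.linearIndependent_iff]
    intro g hg
    rw [Fin.sum_univ_four] at hg
    simp only [Matrix.cons_val_zero, Matrix.cons_val_one, Matrix.head_cons,
      Matrix.cons_val_two, Matrix.tail_cons, Matrix.cons_val_three] at hg
    have key : ∀ w : V, ⟪w, g 0 • Z + g 1 • I Z + g 2 • J Z + g 3 • K Z⟫ = 0 := by
      intro w; rw [hg, inner_zero_right]
    have k0 := key Z
    have k1 := key (I Z)
    have k2 := key (J Z)
    have k3 := key (K Z)
    simp only [inner_add_right, real_inner_smul_right] at k0 k1 k2 k3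
    rw [hZZ, skewI Z, skewJ Z, hZKZ] at k0
    have hg0 : g 0 = 0 := by linarith
    rw [real_inner_comm Z (I Z), skewI Z, hIiso Z Z, hZZ, hIZJZ, hIZKZ] at k1
    rw [real_inner_comm Z (J Z), skewJ Z, real_inner_comm (I Z) (J Z), hIZJZ,
      hJiso Z Z, hZZ, hJZKZ] at k2
    rw [real_inner_comm Z (K Z), hZKZ, real_inner_comm (I Z) (K Z), hIZKZ,
      real_inner_comm (J Z) (K Z), hJZKZ, hKK] at k3
    have hg3 : g 3 = 0 := by
      have : g 3 * (1 - p^2) = 0 := by linarith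
      rcases mul_eq_zero.mp this with h | h
      · exact h
      · linarith
    have hg1 : g 1 = 0 := by
      have h12 : g 1 * (1 - p^2) = 0 := by linear_combination k1 - p * k2
      rcases mul_eq_zero.mp h12 with h | h
      · exact h
      · linarith
    have hg2 : g 2 = 0 := by
      have h12 : g 2 * (1 - p^2) = 0 := by linear_combination k2 - p * k1
      rcases mul_eq_zero.mp h12 with h | h
      · exact h
      · linarith
    intro i
    fin_cases i <;> assumption
  refine ⟨hli, ?_⟩
  apply hli.span_eq_top_of_card_eq_finrank
  simp [hdim]
end

section
/- Assume in addition p² ≠ 1, and define the bilinear form Ω(u, v) := (p² − 1)⁻¹ ⟨Ku, v⟩ on V. Then K is skew-adjoint (⟨Ku, v⟩ = −⟨u, Kv⟩ for all u, v), so Ω is alternating, and for every unit vector Z ∈ V: Ω(Z, KZ) = −1, Ω(IZ, JZ) = −1, and Ω(Z, IZ) = Ω(Z, JZ) = Ω(IZ, KZ) = Ω(JZ, KZ) = 0. (This is the matrix of the symplectic form Ω = (K⁻¹)ᵗ·g in the frame (Z, IZ, JZ, KZ) from Proposition 2.4.) -/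
open scoped RealInnerProductSpace

/-- With `p² ≠ 1` and `Ω(u,v) := (p² - 1)⁻¹ ⟨Ku, v⟩`: `K` is skew-adjoint,
so `Ω` is alternating, and the matrix of the symplectic form `Ω = (K⁻¹)ᵗ·g` in the frame
`(Z, IZ, JZ, KZ)` for a unit vector `Z` is as in Proposition 2.4. -/
theorem gk_symplectic_matrix {V : Type*} [NormedAddCommGroup V] [InnerProductSpace ℝ V]
    (p : ℝ) (hp : p ^ 2 ≠ 1) (I J K : Module.End ℝ V)
    (hIiso : ∀ u v : V, ⟪I u, I v⟫ = ⟪u, v⟫)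
    (hJiso : ∀ u v : V, ⟪J u, J v⟫ = ⟪u, v⟫)
    (hI : I * I = -1) (hJ : J * J = -1)
    (hIJ : I * J + J * I = (-(2 * p)) • (1 : Module.End ℝ V))
    (hK : K = (1 / 2 : ℝ) • (I * J - J * I))
    (Ω : V → V → ℝ) (hΩ : ∀ u v : V, Ω u v = (p ^ 2 - 1)⁻¹ * ⟪K u, v⟫) :
    (∀ u v : V, ⟪K u, v⟫ = -⟪u, K v⟫) ∧
    (∀ u : V, Ω u u = 0) ∧
    (∀ Z : V, ‖Z‖ = 1 →
      Ω Z (K Z) = -1 ∧ Ω (I Z) (J Z) = -1 ∧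
      Ω Z (I Z) = 0 ∧ Ω Z (J Z) = 0 ∧ Ω (I Z) (K Z) = 0 ∧ Ω (J Z) (K Z) = 0) := by
  have hI2 : ∀ v : V, I (I v) = -v := fun v => by
    simpa [Module.End.mul_apply] using LinearMap.ext_iff.mp hI v
  have hJ2 : ∀ v : V, J (J v) = -v := fun v => by
    simpa [Module.End.mul_apply] using LinearMap.ext_iff.mp hJ v
  have hJI : ∀ v : V, J (I v) = -((2 * p) • v) - I (J v) := by
    intro v
    have h := LinearMap.ext_iff.mp hIJ v
    simp only [LinearMap.add_apply, Module.End.mul_apply, LinearMap.smul_apply,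
      Module.End.one_apply] at h
    have h2 : I (J v) + J (I v) = -((2 * p) • v) := by rw [h]; module
    linear_combination (norm := module) h2
  have hKapp : ∀ v : V, K v = I (J v) + p • v := by
    intro v
    rw [hK]
    simp only [LinearMap.smul_apply, LinearMap.sub_apply, Module.End.mul_apply, hJI v]
    module
  -- skew-adjointness of I and J
  have hIs : ∀ u v : V, ⟪I u, v⟫ = -⟪u, I v⟫ := by
    intro u v
    have h := hIiso u (I v)
    rw [hI2, inner_neg_right] at h
    linarith
  have hJs : ∀ u v : V, ⟪J u, v⟫ = -⟪u, J v⟫ := by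
    intro u v
    have h := hJiso u (J v)
    rw [hJ2, inner_neg_right] at h
    linarith
  -- skew-adjointness of K
  have hKs : ∀ u v : V, ⟪K u, v⟫ = -⟪u, K v⟫ := by
    intro u v
    have g1 : ⟪I (J u), v⟫ = -⟪J u, I v⟫ := hIs (J u) v
    have g2 : ⟪J u, I v⟫ = -⟪u, J (I v)⟫ := hJs u (I v)
    have g3 : ⟪u, J (I v)⟫ = -((2 * p) * ⟪u, v⟫) - ⟪u, I (J v)⟫ := by
      rw [hJI]
      rw [inner_sub_right, inner_neg_right, real_inner_smul_right]
    rw [hKapp u, hKapp v, inner_add_left, inner_add_right, real_inner_smul_left,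
      real_inner_smul_right]
    linear_combination g1 - g2 + g3
  refine ⟨hKs, ?_, ?_⟩
  · intro u
    have h := hKs u u
    have h0 : ⟪K u, u⟫ = 0 := by linarith [real_inner_comm u (K u), real_inner_comm (K u) u]
    rw [hΩ, h0, mul_zero]
  · intro Z hZ
    have hZZ : ⟪Z, Z⟫ = (1 : ℝ) := by
      rw [real_inner_self_eq_norm_mul_norm, hZ]; norm_num
    have hc : (p ^ 2 - 1) ≠ 0 := sub_ne_zero.mpr hp
    have hIo : ∀ v : V, ⟪v, I v⟫ = 0 := by
      intro v
      have h := hIs v v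
      linarith [real_inner_comm (I v) v, real_inner_comm v (I v)]
    have hJo : ∀ v : V, ⟪v, J v⟫ = 0 := by
      intro v
      have h := hJs v v
      linarith [real_inner_comm (J v) v, real_inner_comm v (J v)]
    -- inner products in the frame (Z, IZ, JZ, I(JZ))
    have e1 : ⟪Z, I Z⟫ = 0 := hIo Z
    have e1' : ⟪I Z, Z⟫ = 0 := by rw [real_inner_comm]; exact e1
    have e2 : ⟪Z, J Z⟫ = 0 := hJo Z
    have e2' : ⟪J Z, Z⟫ = 0 := by rw [real_inner_comm]; exact e2
    have e3 : ⟪I (J Z), Z⟫ = -p := by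
      have g1 : ⟪J (I Z), Z⟫ = -((2 * p) * ⟪Z, Z⟫) - ⟪I (J Z), Z⟫ := by
        rw [hJI, inner_sub_left, inner_neg_left, real_inner_smul_left]
      have g2 : ⟪J (I Z), Z⟫ = -⟪I Z, J Z⟫ := hJs (I Z) Z
      have g3 : ⟪I Z, J Z⟫ = -⟪Z, I (J Z)⟫ := hIs Z (J Z)
      have g4 : ⟪Z, I (J Z)⟫ = ⟪I (J Z), Z⟫ := real_inner_comm (I (J Z)) Z
      linear_combination (1/2 : ℝ) * g1 - (1/2 : ℝ) * g2 + (1/2 : ℝ) * g3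
        - (1/2 : ℝ) * g4 - p * hZZ
    have e3' : ⟪Z, I (J Z)⟫ = -p := by rw [real_inner_comm]; exact e3
    have e5 : ⟪I Z, J Z⟫ = p := by
      have g3 : ⟪I Z, J Z⟫ = -⟪Z, I (J Z)⟫ := hIs Z (J Z)
      rw [g3, e3']; ring
    have e5' : ⟪J Z, I Z⟫ = p := by rw [real_inner_comm]; exact e5
    have e6 : ⟪I (J Z), I (J Z)⟫ = 1 := by rw [hIiso, hJiso, hZZ]
    have e7 : ⟪I (J Z), I Z⟫ = 0 := by rw [hIiso]; exact e2'
    have e7' : ⟪I Z, I (J Z)⟫ = 0 := by rw [real_inner_comm]; exact e7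
    have e8 : ⟪J Z, I (J Z)⟫ = 0 := hIo (J Z)
    have e8' : ⟪I (J Z), J Z⟫ = 0 := by rw [real_inner_comm]; exact e8
    have hIZZ : ⟪I Z, I Z⟫ = 1 := by rw [hIiso, hZZ]
    have hJZZ : ⟪J Z, J Z⟫ = 1 := by rw [hJiso, hZZ]
    refine ⟨?_, ?_, ?_, ?_, ?_, ?_⟩
    all_goals
      rw [hΩ]
      simp only [hKapp, hJI, map_sub, map_neg, map_smul, hI2, hJ2, smul_neg, neg_neg,
        inner_add_left, inner_add_right, inner_sub_left, inner_sub_right,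
        inner_neg_left, inner_neg_right, real_inner_smul_left, real_inner_smul_right,
        e1, e1', e2, e2', e3, e3', e5, e5', e6, e7, e7', e8, e8', hZZ, hIZZ, hJZZ]
      field_simp
      try ring
end

section
/- The baseline function W̃ satisfies the linear elliptic equation W̃₁₁ + (1/2)·((1+p)·W̃)₊₊ + (1/2)·((1−p)·W̃)₋₋ = 0 at every point of ℝ³. (Lemma 5.1 of the paper: the explicit baseline solution of the Gibbons–Hawking equation for rank one generalized Kähler–Ricci solitons.) -/
/-- Partial derivative in the `i`-th coordinate direction of a function on `ℝ³`
(coordinates `μ₁ = x 0`, `μ₊ = x 1`, `μ₋ = x 2`). -/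
noncomputable def pd3 (i : Fin 3) (F : (Fin 3 → ℝ) → ℝ) (x : Fin 3 → ℝ) : ℝ :=
  deriv (fun t => F (Function.update x i t)) (x i)

namespace BaselineAux

noncomputable def A (ap am s : ℝ) : ℝ := ap ^ 2 + am ^ 2 * Real.exp s
noncomputable def F (ap am s : ℝ) : ℝ := (A ap am s)⁻¹
noncomputable def G (ap am s : ℝ) : ℝ := Real.exp s * (A ap am s)⁻¹
noncomputable def F' (ap am s : ℝ) : ℝ := -(am ^ 2 * Real.exp s) / (A ap am s) ^ 2
noncomputable def G' (ap am s : ℝ) : ℝ := ap ^ 2 * Real.exp s / (A ap am s) ^ 2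

variable {ap am : ℝ}

lemma Apos (hne : ¬(ap = 0 ∧ am = 0)) (s : ℝ) : 0 < A ap am s := by
  unfold A
  rcases not_and_or.mp hne with h | h
  · have h1 : 0 < ap ^ 2 := by positivity
    have h2 : 0 ≤ am ^ 2 * Real.exp s := by positivity
    linarith
  · have h1 : 0 ≤ ap ^ 2 := by positivity
    have h2 : 0 < am ^ 2 * Real.exp s := by positivity
    linarith

lemma hasDerivAt_A (s : ℝ) : HasDerivAt (A ap am) (am ^ 2 * Real.exp s) s := by
  have := ((Real.hasDerivAt_exp s).const_mul (am ^ 2)).const_add (ap ^ 2)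
  exact this

lemma hasDerivAt_F (hne : ¬(ap = 0 ∧ am = 0)) (s : ℝ) :
    HasDerivAt (F ap am) (F' ap am s) s := by
  have hA := (Apos hne s).ne'
  have := (hasDerivAt_A (ap := ap) (am := am) s).inv hA
  exact this

lemma hasDerivAt_G (hne : ¬(ap = 0 ∧ am = 0)) (s : ℝ) :
    HasDerivAt (G ap am) (G' ap am s) s := by
  have hA := (Apos hne s).ne'
  have h := (Real.hasDerivAt_exp s).mul (hasDerivAt_F hne s)
  have heq : Real.exp s * F ap am s + Real.exp s * F' ap am s = G' ap am s := by
    have hA' : ap ^ 2 + am ^ 2 * Real.exp s ≠ 0 := by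
      have := Apos hne s; unfold A at this; exact this.ne'
    unfold F F' G' A
    field_simp
    ring
  rw [heq] at h
  exact h

lemma diffA (s : ℝ) : DifferentiableAt ℝ (A ap am) s :=
  (hasDerivAt_A s).differentiableAt

lemma diff_F' (hne : ¬(ap = 0 ∧ am = 0)) (s : ℝ) :
    DifferentiableAt ℝ (F' ap am) s := by
  have hA := (Apos hne s).ne'
  have h1 : DifferentiableAt ℝ (fun t => -(am ^ 2 * Real.exp t)) s := by fun_prop
  have h2 : DifferentiableAt ℝ (fun t => (A ap am t) ^ 2) s := (diffA s).pow 2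
  exact h1.div h2 (pow_ne_zero 2 hA)

lemma diff_G' (hne : ¬(ap = 0 ∧ am = 0)) (s : ℝ) :
    DifferentiableAt ℝ (G' ap am) s := by
  have hA := (Apos hne s).ne'
  have h1 : DifferentiableAt ℝ (fun t => ap ^ 2 * Real.exp t) s := by fun_prop
  have h2 : DifferentiableAt ℝ (fun t => (A ap am t) ^ 2) s := (diffA s).pow 2
  exact h1.div h2 (pow_ne_zero 2 hA)

lemma key (hne : ¬(ap = 0 ∧ am = 0)) (s : ℝ) :
    ap ^ 2 * deriv (F' ap am) s + am ^ 2 * deriv (G' ap am) s = 0 := by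
  have hzero : (fun t => ap ^ 2 * F' ap am t + am ^ 2 * G' ap am t) = fun _ => (0 : ℝ) := by
    funext t
    have hA := (Apos hne t).ne'
    unfold F' G'
    field_simp
    ring
  have hd : deriv (fun t => ap ^ 2 * F' ap am t + am ^ 2 * G' ap am t) s
      = ap ^ 2 * deriv (F' ap am) s + am ^ 2 * deriv (G' ap am) s := by
    rw [deriv_fun_add ((diff_F' hne s).const_mul _) ((diff_G' hne s).const_mul _),
        deriv_const_mul _ (diff_F' hne s), deriv_const_mul _ (diff_G' hne s)]
  rw [← hd, hzero, deriv_const]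

end BaselineAux

open BaselineAux in
/-- (Lemma 5.1.) The baseline solution
`W̃ = (a₊²(1+p) + a₋²(1-p))⁻¹` satisfies the linear elliptic equation
`W̃₁₁ + (1/2)((1+p)W̃)₊₊ + (1/2)((1-p)W̃)₋₋ = 0` at every point of `ℝ³`. -/
theorem baseline_solution (ap am : ℝ) (hne : ¬(ap = 0 ∧ am = 0))
    (Φ p Wt : (Fin 3 → ℝ) → ℝ)
    (hΦ : ∀ x, Φ x = ap * x 1 + am * x 2)
    (hp : ∀ x, p x = (1 - Real.exp (Φ x)) / (1 + Real.exp (Φ x)))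
    (hWt : ∀ x, Wt x = (ap ^ 2 * (1 + p x) + am ^ 2 * (1 - p x))⁻¹) :
    ∀ x : Fin 3 → ℝ,
      pd3 0 (pd3 0 Wt) x
        + (1 / 2) * pd3 1 (pd3 1 (fun y => (1 + p y) * Wt y)) x
        + (1 / 2) * pd3 2 (pd3 2 (fun y => (1 - p y) * Wt y)) x = 0 := by
  intro x
  -- term in direction 0 vanishes since Wt does not depend on x 0
  have h0 : pd3 0 (pd3 0 Wt) x = 0 := by
    have hin : pd3 0 Wt = fun _ => 0 := by
      funext y
      unfold pd3
      have hc : (fun t => Wt (Function.update y 0 t)) = fun _ => Wt y := by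
        funext t
        rw [hWt, hWt, hp, hp, hΦ, hΦ]
        simp [Function.update]
      rw [hc, deriv_const]
    rw [hin]
    unfold pd3
    simp
  -- rewrite the two products as functions of Φ only
  have hu : (fun y => (1 + p y) * Wt y) = fun y => F ap am (Φ y) := by
    funext y
    rw [hWt, hp]
    set e := Real.exp (Φ y) with he
    have hepos : 0 < e := Real.exp_pos _
    have h1 : (1 : ℝ) + e ≠ 0 := by linarith
    have hA0 : 0 < ap ^ 2 + am ^ 2 * e := by
      have := Apos hne (Φ y); unfold A at this; rw [← he] at this; exact this
    have hA : ap ^ 2 + am ^ 2 * e ≠ 0 := hA0.ne'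
    unfold F A
    rw [← he]
    have hmid : ap ^ 2 * (1 + (1 - e) / (1 + e)) + am ^ 2 * (1 - (1 - e) / (1 + e))
        = 2 * (ap ^ 2 + am ^ 2 * e) / (1 + e) := by
      field_simp
      ring
    rw [hmid]
    field_simp
    try ring
    try tauto
  have hv : (fun y => (1 - p y) * Wt y) = fun y => G ap am (Φ y) := by
    funext y
    rw [hWt, hp]
    set e := Real.exp (Φ y) with he
    have hepos : 0 < e := Real.exp_pos _
    have h1 : (1 : ℝ) + e ≠ 0 := by linarith
    have hA0 : 0 < ap ^ 2 + am ^ 2 * e := by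
      have := Apos hne (Φ y); unfold A at this; rw [← he] at this; exact this
    have hA : ap ^ 2 + am ^ 2 * e ≠ 0 := hA0.ne'
    unfold G A
    rw [← he]
    have hmid : ap ^ 2 * (1 + (1 - e) / (1 + e)) + am ^ 2 * (1 - (1 - e) / (1 + e))
        = 2 * (ap ^ 2 + am ^ 2 * e) / (1 + e) := by
      field_simp
      ring
    rw [hmid]
    field_simp
    try ring
    try tauto
  -- first derivatives
  have dF1 : ∀ y : Fin 3 → ℝ, pd3 1 (fun z => F ap am (Φ z)) y = ap * F' ap am (Φ y) := by
    intro y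
    unfold pd3
    have hfun : (fun t => F ap am (Φ (Function.update y 1 t)))
        = fun t => F ap am (ap * t + am * y 2) := by
      funext t
      rw [hΦ]
      simp [Function.update]
    rw [hfun]
    have hlin : HasDerivAt (fun t : ℝ => ap * t + am * y 2) ap (y 1) := by
      simpa using ((hasDerivAt_id (y 1)).const_mul ap).add_const (am * y 2)
    have h2 : HasDerivAt (fun t : ℝ => F ap am (ap * t + am * y 2))
        (F' ap am (ap * y 1 + am * y 2) * ap) (y 1) :=
      (hasDerivAt_F hne _).comp _ hlin
    rw [h2.deriv, hΦ]
    ring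
  have dG1 : ∀ y : Fin 3 → ℝ, pd3 2 (fun z => G ap am (Φ z)) y = am * G' ap am (Φ y) := by
    intro y
    unfold pd3
    have hfun : (fun t => G ap am (Φ (Function.update y 2 t)))
        = fun t => G ap am (ap * y 1 + am * t) := by
      funext t
      rw [hΦ]
      simp [Function.update]
    rw [hfun]
    have hlin : HasDerivAt (fun t : ℝ => ap * y 1 + am * t) am (y 2) := by
      simpa using (((hasDerivAt_id (y 2)).const_mul am).const_add (ap * y 1))
    have h2 : HasDerivAt (fun t : ℝ => G ap am (ap * y 1 + am * t))
        (G' ap am (ap * y 1 + am * y 2) * am) (y 2) :=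
      (hasDerivAt_G hne _).comp _ hlin
    rw [h2.deriv, hΦ]
    ring
  -- second derivatives
  have dF2 : pd3 1 (fun y => ap * F' ap am (Φ y)) x = ap * (deriv (F' ap am) (Φ x) * ap) := by
    unfold pd3
    have hfun : (fun t => ap * F' ap am (Φ (Function.update x 1 t)))
        = fun t => ap * F' ap am (ap * t + am * x 2) := by
      funext t
      rw [hΦ]
      simp [Function.update]
    rw [hfun]
    have hlin : HasDerivAt (fun t : ℝ => ap * t + am * x 2) ap (x 1) := by
      simpa using ((hasDerivAt_id (x 1)).const_mul ap).add_const (am * x 2)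
    have h2 : HasDerivAt (fun t : ℝ => ap * F' ap am (ap * t + am * x 2))
        (ap * (deriv (F' ap am) (ap * x 1 + am * x 2) * ap)) (x 1) :=
      (((diff_F' hne _).hasDerivAt.comp _ hlin)).const_mul ap
    rw [h2.deriv, hΦ]
  have dG2 : pd3 2 (fun y => am * G' ap am (Φ y)) x = am * (deriv (G' ap am) (Φ x) * am) := by
    unfold pd3
    have hfun : (fun t => am * G' ap am (Φ (Function.update x 2 t)))
        = fun t => am * G' ap am (ap * x 1 + am * t) := by
      funext t
      rw [hΦ]
      simp [Function.update]
    rw [hfun]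
    have hlin : HasDerivAt (fun t : ℝ => ap * x 1 + am * t) am (x 2) := by
      simpa using (((hasDerivAt_id (x 2)).const_mul am).const_add (ap * x 1))
    have h2 : HasDerivAt (fun t : ℝ => am * G' ap am (ap * x 1 + am * t))
        (am * (deriv (G' ap am) (ap * x 1 + am * x 2) * am)) (x 2) :=
      (((diff_G' hne _).hasDerivAt.comp _ hlin)).const_mul am
    rw [h2.deriv, hΦ]
  have e1 : pd3 1 (fun z => F ap am (Φ z)) = fun y => ap * F' ap am (Φ y) := funext dF1
  have e2 : pd3 2 (fun z => G ap am (Φ z)) = fun y => am * G' ap am (Φ y) := funext dG1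
  rw [hu, hv, e1, e2, dF2, dG2, h0]
  linear_combination (1 / 2) * key hne (Φ x)
end

section
/- At every point of ℝ³ the conformal factor identities W̃·(ψ(1+p))₊ = 2ψ·(W̃(1+p))₊ and W̃·(ψ(1−p))₋ = 2ψ·(W̃(1−p))₋ hold. (This is the key computational identity in the proof of Proposition 6.1.) -/
/-- (Key identity in the proof of Proposition 6.1.) At every point of
`ℝ³` one has `W̃·(ψ(1+p))₊ = 2ψ·(W̃(1+p))₊` and `W̃·(ψ(1-p))₋ = 2ψ·(W̃(1-p))₋`. -/
theorem conformal_factor_identities (ap am : ℝ) (hne : ¬(ap = 0 ∧ am = 0))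
    (Φ p Wt ψ : (Fin 3 → ℝ) → ℝ)
    (hΦ : ∀ x, Φ x = ap * x 1 + am * x 2)
    (hp : ∀ x, p x = (1 - Real.exp (Φ x)) / (1 + Real.exp (Φ x)))
    (hWt : ∀ x, Wt x = (ap ^ 2 * (1 + p x) + am ^ 2 * (1 - p x))⁻¹)
    (hψ : ∀ x, ψ x = 2 * (Wt x) ^ 2 / (Real.exp (ap * x 1) + Real.exp (-(am * x 2)))) :
    ∀ x : Fin 3 → ℝ,
      Wt x * pd3 1 (fun y => ψ y * (1 + p y)) x
        = 2 * ψ x * pd3 1 (fun y => Wt y * (1 + p y)) x ∧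
      Wt x * pd3 2 (fun y => ψ y * (1 - p y)) x
        = 2 * ψ x * pd3 2 (fun y => Wt y * (1 - p y)) x := by
  have hDpos : ∀ u v : ℝ, 0 < ap ^ 2 + am ^ 2 * (Real.exp u * Real.exp v) := by
    intro u v
    have hA := Real.exp_pos u; have hB := Real.exp_pos v
    rcases not_and_or.mp hne with h | h
    · have h2 : 0 < ap ^ 2 := by positivity
      nlinarith [mul_nonneg (sq_nonneg am) (mul_pos hA hB).le]
    · have h2 : 0 < am ^ 2 := by positivity
      nlinarith [sq_nonneg ap, mul_pos h2 (mul_pos hA hB)]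
  -- pointwise closed forms
  have hWt' : ∀ y : Fin 3 → ℝ, Wt y =
      (1 + Real.exp (ap * y 1) * Real.exp (am * y 2)) /
        (2 * (ap ^ 2 + am ^ 2 * (Real.exp (ap * y 1) * Real.exp (am * y 2)))) := by
    intro y
    have hA := Real.exp_pos (ap * y 1); have hB := Real.exp_pos (am * y 2)
    have hS : (0:ℝ) < 1 + Real.exp (ap * y 1) * Real.exp (am * y 2) := by positivity
    have h1 : ap ^ 2 * (1 + p y) + am ^ 2 * (1 - p y)
        = 2 * (ap ^ 2 + am ^ 2 * (Real.exp (ap * y 1) * Real.exp (am * y 2))) /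
          (1 + Real.exp (ap * y 1) * Real.exp (am * y 2)) := by
      rw [hp, hΦ, Real.exp_add]; field_simp; ring
    rw [hWt, h1, inv_div]
  have hψ' : ∀ y : Fin 3 → ℝ, ψ y =
      Real.exp (am * y 2) * (1 + Real.exp (ap * y 1) * Real.exp (am * y 2)) /
        (2 * (ap ^ 2 + am ^ 2 * (Real.exp (ap * y 1) * Real.exp (am * y 2))) ^ 2) := by
    intro y
    have hA := Real.exp_pos (ap * y 1); have hB := Real.exp_pos (am * y 2)
    have hD := hDpos (ap * y 1) (am * y 2)
    rw [hψ, hWt' y, Real.exp_neg]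
    rw [div_pow]
    field_simp
    ring
  -- products
  have hψp : ∀ y : Fin 3 → ℝ, ψ y * (1 + p y) =
      Real.exp (am * y 2) * ((ap ^ 2 + am ^ 2 * (Real.exp (ap * y 1) * Real.exp (am * y 2))) ^ 2)⁻¹ := by
    intro y
    have hA := Real.exp_pos (ap * y 1); have hB := Real.exp_pos (am * y 2)
    have hD := hDpos (ap * y 1) (am * y 2)
    have hS : (0:ℝ) < 1 + Real.exp (ap * y 1) * Real.exp (am * y 2) := by positivity
    rw [hψ' y, hp, hΦ, Real.exp_add]
    field_simp
    ring
  have hWtp : ∀ y : Fin 3 → ℝ, Wt y * (1 + p y) =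
      ((ap ^ 2 + am ^ 2 * (Real.exp (ap * y 1) * Real.exp (am * y 2))))⁻¹ := by
    intro y
    have hA := Real.exp_pos (ap * y 1); have hB := Real.exp_pos (am * y 2)
    have hD := hDpos (ap * y 1) (am * y 2)
    have hS : (0:ℝ) < 1 + Real.exp (ap * y 1) * Real.exp (am * y 2) := by positivity
    rw [hWt' y, hp, hΦ, Real.exp_add]
    field_simp
    ring
  have hψm : ∀ y : Fin 3 → ℝ, ψ y * (1 - p y) =
      Real.exp (ap * y 1) * Real.exp (am * y 2) ^ 2 /
        ((ap ^ 2 + am ^ 2 * (Real.exp (ap * y 1) * Real.exp (am * y 2))) ^ 2) := by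
    intro y
    have hA := Real.exp_pos (ap * y 1); have hB := Real.exp_pos (am * y 2)
    have hD := hDpos (ap * y 1) (am * y 2)
    have hS : (0:ℝ) < 1 + Real.exp (ap * y 1) * Real.exp (am * y 2) := by positivity
    rw [hψ' y, hp, hΦ, Real.exp_add]
    field_simp
    ring
  have hWtm : ∀ y : Fin 3 → ℝ, Wt y * (1 - p y) =
      Real.exp (ap * y 1) * Real.exp (am * y 2) /
        (ap ^ 2 + am ^ 2 * (Real.exp (ap * y 1) * Real.exp (am * y 2))) := by
    intro y
    have hA := Real.exp_pos (ap * y 1); have hB := Real.exp_pos (am * y 2)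
    have hD := hDpos (ap * y 1) (am * y 2)
    have hS : (0:ℝ) < 1 + Real.exp (ap * y 1) * Real.exp (am * y 2) := by positivity
    rw [hWt' y, hp, hΦ, Real.exp_add]
    field_simp
    ring
  intro x
  have h21 : (2 : Fin 3) ≠ 1 := by decide
  have h12 : (1 : Fin 3) ≠ 2 := by decide
  have hA := Real.exp_pos (ap * x 1); have hB := Real.exp_pos (am * x 2)
  have hD := hDpos (ap * x 1) (am * x 2)
  constructor
  · -- direction μ₊
    set B := Real.exp (am * x 2) with hBdef
    have e1 : (fun t => ψ (Function.update x 1 t) * (1 + p (Function.update x 1 t)))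
        = fun t => B * ((ap ^ 2 + am ^ 2 * (Real.exp (ap * t) * B)) ^ 2)⁻¹ := by
      funext t
      have := hψp (Function.update x 1 t)
      simpa [Function.update_self, Function.update_of_ne h21] using this
    have e2 : (fun t => Wt (Function.update x 1 t) * (1 + p (Function.update x 1 t)))
        = fun t => ((ap ^ 2 + am ^ 2 * (Real.exp (ap * t) * B)))⁻¹ := by
      funext t
      have := hWtp (Function.update x 1 t)
      simpa [Function.update_self, Function.update_of_ne h21] using this
    have h0 : HasDerivAt (fun t : ℝ => ap * t) ap (x 1) := by
      simpa using (hasDerivAt_id (x 1)).const_mul ap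
    have hE := h0.exp
    have hD1 : HasDerivAt (fun t => ap ^ 2 + am ^ 2 * (Real.exp (ap * t) * B))
        (am ^ 2 * (Real.exp (ap * x 1) * ap * B)) (x 1) :=
      ((hE.mul_const B).const_mul (am ^ 2)).const_add (ap ^ 2)
    have hDne : (ap ^ 2 + am ^ 2 * (Real.exp (ap * x 1) * B)) ≠ 0 := ne_of_gt hD
    have hF1 : HasDerivAt (fun t => B * ((ap ^ 2 + am ^ 2 * (Real.exp (ap * t) * B)) ^ 2)⁻¹) _ (x 1) :=
      ((hD1.pow 2).inv (pow_ne_zero 2 hDne)).const_mul B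
    have hF2 : HasDerivAt (fun t => (ap ^ 2 + am ^ 2 * (Real.exp (ap * t) * B))⁻¹) _ (x 1) := hD1.inv hDne
    rw [pd3, pd3, e1, e2, hF1.deriv, hF2.deriv, hWt' x, hψ' x]
    simp only [Pi.pow_apply, hBdef] at hD ⊢
    generalize hDd : ap ^ 2 + am ^ 2 * (Real.exp (ap * x 1) * Real.exp (am * x 2)) = D at hD ⊢
    field_simp
    subst hDd
    ring
  · -- direction μ₋
    set A := Real.exp (ap * x 1) with hAdef
    have e1 : (fun t => ψ (Function.update x 2 t) * (1 - p (Function.update x 2 t)))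
        = fun t => A * Real.exp (am * t) ^ 2 / ((ap ^ 2 + am ^ 2 * (A * Real.exp (am * t))) ^ 2) := by
      funext t
      have := hψm (Function.update x 2 t)
      simpa [Function.update_self, Function.update_of_ne h12] using this
    have e2 : (fun t => Wt (Function.update x 2 t) * (1 - p (Function.update x 2 t)))
        = fun t => A * Real.exp (am * t) / (ap ^ 2 + am ^ 2 * (A * Real.exp (am * t))) := by
      funext t
      have := hWtm (Function.update x 2 t)
      simpa [Function.update_self, Function.update_of_ne h12] using this
    have h0 : HasDerivAt (fun t : ℝ => am * t) am (x 2) := by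
      simpa using (hasDerivAt_id (x 2)).const_mul am
    have hE := h0.exp
    have hD1 : HasDerivAt (fun t => ap ^ 2 + am ^ 2 * (A * Real.exp (am * t)))
        (am ^ 2 * (A * (Real.exp (am * x 2) * am))) (x 2) :=
      ((hE.const_mul A).const_mul (am ^ 2)).const_add (ap ^ 2)
    have hDne : (ap ^ 2 + am ^ 2 * (A * Real.exp (am * x 2))) ≠ 0 := by
      have := hDpos (ap * x 1) (am * x 2); rw [hAdef] at *; linarith
    have hN1 := (hE.pow 2).const_mul A
    have hN2 := hE.const_mul A
    have hF1 : HasDerivAt (fun t => A * Real.exp (am * t) ^ 2 / (ap ^ 2 + am ^ 2 * (A * Real.exp (am * t))) ^ 2) _ (x 2) :=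
      hN1.div (hD1.pow 2) (pow_ne_zero 2 hDne)
    have hF2 : HasDerivAt (fun t => A * Real.exp (am * t) / (ap ^ 2 + am ^ 2 * (A * Real.exp (am * t)))) _ (x 2) :=
      hN2.div hD1 hDne
    rw [pd3, pd3, e1, e2, hF1.deriv, hF2.deriv, hWt' x, hψ' x]
    simp only [Pi.pow_apply, hAdef] at hD ⊢
    generalize hDd : ap ^ 2 + am ^ 2 * (Real.exp (ap * x 1) * Real.exp (am * x 2)) = D at hD ⊢
    field_simp
    subst hDd
    ring
end

section
/- Let γ : [0,1) → U be a continuously differentiable curve whose length L := ∫₀¹ ‖γ'(t)‖ dt is finite, and suppose W is unbounded along γ, i.e. there is a sequence tₙ → 1 with W(γ(tₙ)) → ∞. Then W(γ(0))^(−1/2) ≤ (C/2)·L; equivalently 1 ≤ (C·L/2)²·W(γ(0)), and in particular if L > 0 then W(γ(0)) ≥ 4/(C²L²). (This is Step 2 of the proof of Proposition 5.5: a Cheng–Yau type gradient estimate forces a quantitative blow-up rate of W near the completion boundary.) -/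
open MeasureTheory

/-- (Step 2 of the proof of Proposition 5.5.) If `W > 0` on `U` with
`‖DW‖ ≤ C·W^(3/2)`, and `γ : [0,1) → U` is a C¹ curve of finite length `L` along which
`W` blows up, then `W(γ 0)^(-1/2) ≤ (C/2)·L`; equivalently `1 ≤ (C·L/2)²·W(γ 0)`, and in
particular if `L > 0` then `W(γ 0) ≥ 4/(C²L²)`. -/
theorem gradient_blowup_rate {E : Type*} [NormedAddCommGroup E] [NormedSpace ℝ E]
    (U : Set E) (hU : IsOpen U) (C : ℝ) (hC : 0 < C)
    (W : E → ℝ)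
    (hdiff : ∀ x ∈ U, DifferentiableAt ℝ W x)
    (hpos : ∀ x ∈ U, 0 < W x)
    (hgrad : ∀ x ∈ U, ‖fderiv ℝ W x‖ ≤ C * W x ^ ((3 : ℝ) / 2))
    (γ γ' : ℝ → E)
    (hγU : ∀ t ∈ Set.Ico (0 : ℝ) 1, γ t ∈ U)
    (hγ : ∀ t ∈ Set.Ico (0 : ℝ) 1, HasDerivAt γ (γ' t) t)
    (hγ'cont : ContinuousOn γ' (Set.Ico (0 : ℝ) 1))
    (hint : IntegrableOn (fun t => ‖γ' t‖) (Set.Ico (0 : ℝ) 1))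
    (L : ℝ) (hL : L = ∫ t in Set.Ico (0 : ℝ) 1, ‖γ' t‖)
    (t : ℕ → ℝ) (ht : ∀ n, t n ∈ Set.Ico (0 : ℝ) 1)
    (htlim : Filter.Tendsto t Filter.atTop (nhds 1))
    (hWblow : Filter.Tendsto (fun n => W (γ (t n))) Filter.atTop Filter.atTop) :
    W (γ 0) ^ (-(1 : ℝ) / 2) ≤ C / 2 * L ∧
    1 ≤ (C * L / 2) ^ 2 * W (γ 0) ∧
    (0 < L → 4 / (C ^ 2 * L ^ 2) ≤ W (γ 0)) := by
  have h0mem : (0 : ℝ) ∈ Set.Ico (0 : ℝ) 1 := ⟨le_refl _, one_pos⟩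
  have h0U : γ 0 ∈ U := hγU 0 h0mem
  have hW0 : 0 < W (γ 0) := hpos _ h0U
  -- The key monotonicity estimate along the curve
  have hkey : ∀ n, W (γ 0) ^ (-(1 : ℝ) / 2) ≤
      W (γ (t n)) ^ (-(1 : ℝ) / 2) + C / 2 * ∫ u in (0 : ℝ)..(t n), ‖γ' u‖ := by
    intro n
    obtain ⟨hb0, hb1⟩ := ht n
    set b := t n with hbdef
    set g : ℝ → ℝ := fun s => W (γ s) ^ (-(1 : ℝ) / 2) + C / 2 * ∫ u in (0 : ℝ)..s, ‖γ' u‖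
      with hgdef
    have hsub : Set.Icc (0 : ℝ) b ⊆ Set.Ico (0 : ℝ) 1 := fun s hs =>
      ⟨hs.1, lt_of_le_of_lt hs.2 hb1⟩
    -- derivative of g at interior points
    have hderiv : ∀ s ∈ Set.Ioo (0 : ℝ) b, HasDerivAt g
        ((fderiv ℝ W (γ s)) (γ' s) * (-(1 : ℝ) / 2) * W (γ s) ^ (-(1 : ℝ) / 2 - 1)
          + C / 2 * ‖γ' s‖) s := by
      intro s hs
      have hsmem : s ∈ Set.Ico (0 : ℝ) 1 := hsub ⟨hs.1.le, hs.2.le⟩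
      have hsU : γ s ∈ U := hγU s hsmem
      have hWγ : HasDerivAt (fun u => W (γ u)) ((fderiv ℝ W (γ s)) (γ' s)) s :=
        (hdiff _ hsU).hasFDerivAt.comp_hasDerivAt s (hγ s hsmem)
      have h1 : HasDerivAt (fun u => W (γ u) ^ (-(1 : ℝ) / 2))
          ((fderiv ℝ W (γ s)) (γ' s) * (-(1 : ℝ) / 2) * W (γ s) ^ (-(1 : ℝ) / 2 - 1)) s :=
        hWγ.rpow_const (Or.inl (hpos _ hsU).ne')
      have hII : IntervalIntegrable (fun u => ‖γ' u‖) volume 0 s := by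
        rw [intervalIntegrable_iff, Set.uIoc_of_le hs.1.le]
        exact hint.mono_set fun u hu => ⟨hu.1.le, lt_of_le_of_lt hu.2 hsmem.2⟩
      have hIoo : s ∈ Set.Ioo (0 : ℝ) 1 := ⟨hs.1, hsmem.2⟩
      have hcontγ' : ContinuousOn (fun u => ‖γ' u‖) (Set.Ioo (0 : ℝ) 1) :=
        (hγ'cont.mono Set.Ioo_subset_Ico_self).norm
      have h2 : HasDerivAt (fun u => ∫ x in (0 : ℝ)..u, ‖γ' x‖) ‖γ' s‖ s :=
        intervalIntegral.integral_hasDerivAt_right hII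
          (hcontγ'.stronglyMeasurableAtFilter isOpen_Ioo s hIoo)
          ((hcontγ'.continuousAt (isOpen_Ioo.mem_nhds hIoo)))
      exact h1.add ((h2.const_mul (C / 2)))
    -- derivative is nonnegative
    have hderiv_nonneg : ∀ s ∈ Set.Ioo (0 : ℝ) b,
        0 ≤ (fderiv ℝ W (γ s)) (γ' s) * (-(1 : ℝ) / 2) * W (γ s) ^ (-(1 : ℝ) / 2 - 1)
          + C / 2 * ‖γ' s‖ := by
      intro s hs
      have hsmem : s ∈ Set.Ico (0 : ℝ) 1 := hsub ⟨hs.1.le, hs.2.le⟩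
      have hsU : γ s ∈ U := hγU s hsmem
      have hWs : 0 < W (γ s) := hpos _ hsU
      have hb1' : |(fderiv ℝ W (γ s)) (γ' s)| ≤ C * W (γ s) ^ ((3 : ℝ) / 2) * ‖γ' s‖ := by
        calc |(fderiv ℝ W (γ s)) (γ' s)| ≤ ‖fderiv ℝ W (γ s)‖ * ‖γ' s‖ :=
              (fderiv ℝ W (γ s)).le_opNorm (γ' s)
          _ ≤ C * W (γ s) ^ ((3 : ℝ) / 2) * ‖γ' s‖ :=
              mul_le_mul_of_nonneg_right (hgrad _ hsU) (norm_nonneg _)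
      have hrp : (0 : ℝ) < W (γ s) ^ (-(1 : ℝ) / 2 - 1) := Real.rpow_pos_of_pos hWs _
      have hprod : W (γ s) ^ ((3 : ℝ) / 2) * W (γ s) ^ (-(1 : ℝ) / 2 - 1) = 1 := by
        rw [← Real.rpow_add hWs]
        norm_num
      set D := (fderiv ℝ W (γ s)) (γ' s) with hD
      set P := W (γ s) ^ (-(1 : ℝ) / 2 - 1) with hP
      have h4 : |D| * P ≤ C * W (γ s) ^ ((3 : ℝ) / 2) * ‖γ' s‖ * P :=
        mul_le_mul_of_nonneg_right hb1' hrp.le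
      have h5 : C * W (γ s) ^ ((3 : ℝ) / 2) * ‖γ' s‖ * P = C * ‖γ' s‖ := by
        calc C * W (γ s) ^ ((3 : ℝ) / 2) * ‖γ' s‖ * P
            = C * ‖γ' s‖ * (W (γ s) ^ ((3 : ℝ) / 2) * P) := by ring
          _ = C * ‖γ' s‖ := by rw [hprod, mul_one]
      have hDP : D * P ≤ C * ‖γ' s‖ := by
        calc D * P ≤ |D| * P := mul_le_mul_of_nonneg_right (le_abs_self D) hrp.le
          _ ≤ C * ‖γ' s‖ := h5 ▸ h4
      have heq : D * (-(1 : ℝ) / 2) * P = -(D * P) / 2 := by ring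
      rw [heq]
      linarith
    have hcont : ContinuousOn g (Set.Icc 0 b) := by
      apply ContinuousOn.add
      · intro s hs
        have hsmem : s ∈ Set.Ico (0 : ℝ) 1 := hsub hs
        have hsU : γ s ∈ U := hγU s hsmem
        have : ContinuousAt (fun u => W (γ u) ^ (-(1 : ℝ) / 2)) s := by
          exact (((hdiff _ hsU).continuousAt.comp (hγ s hsmem).continuousAt).rpow_const
            (Or.inl (hpos _ hsU).ne'))
        exact this.continuousWithinAt
      · have hII : IntegrableOn (fun u => ‖γ' u‖) (Set.uIcc (0 : ℝ) b) := by
          rw [Set.uIcc_of_le hb0]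
          exact hint.mono_set fun u hu => ⟨hu.1, lt_of_le_of_lt hu.2 hb1⟩
        have := (intervalIntegral.continuousOn_primitive_interval hII).const_smul (C / 2)
        rw [Set.uIcc_of_le hb0] at this
        simpa [smul_eq_mul, Pi.smul_def] using this
    have hmono : MonotoneOn g (Set.Icc 0 b) := by
      apply monotoneOn_of_deriv_nonneg (convex_Icc 0 b) hcont
      · intro s hs
        rw [interior_Icc] at hs
        exact ((hderiv s hs).differentiableAt).differentiableWithinAt
      · intro s hs
        rw [interior_Icc] at hs
        rw [(hderiv s hs).deriv]
        exact hderiv_nonneg s hs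
    have := hmono (Set.left_mem_Icc.2 hb0) (Set.right_mem_Icc.2 hb0) hb0
    simpa [hgdef, intervalIntegral.integral_same] using this
  -- bound the interval integral by L
  have hLbound : ∀ n, (∫ u in (0 : ℝ)..(t n), ‖γ' u‖) ≤ L := by
    intro n
    obtain ⟨hb0, hb1⟩ := ht n
    rw [intervalIntegral.integral_of_le hb0, hL]
    apply setIntegral_mono_set hint
    · filter_upwards with u using norm_nonneg _
    · filter_upwards with u hu using ⟨hu.1.le, lt_of_le_of_lt hu.2 hb1⟩
  have hseq : ∀ n, W (γ 0) ^ (-(1 : ℝ) / 2) ≤ W (γ (t n)) ^ (-(1 : ℝ) / 2) + C / 2 * L := by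
    intro n
    refine (hkey n).trans (add_le_add le_rfl ?_)
    exact mul_le_mul_of_nonneg_left (hLbound n) (by positivity)
  -- take the limit
  have htend : Filter.Tendsto (fun n => W (γ (t n)) ^ (-(1 : ℝ) / 2) + C / 2 * L)
      Filter.atTop (nhds (0 + C / 2 * L)) := by
    apply Filter.Tendsto.add _ tendsto_const_nhds
    have h := (tendsto_rpow_neg_atTop (by norm_num : (0 : ℝ) < 1 / 2)).comp hWblow
    simpa [neg_div, Function.comp_def] using h
  have hmain : W (γ 0) ^ (-(1 : ℝ) / 2) ≤ C / 2 * L := by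
    have := ge_of_tendsto' htend hseq
    linarith
  have hrp0 : 0 < W (γ 0) ^ (-(1 : ℝ) / 2) := Real.rpow_pos_of_pos hW0 _
  have hLpos : 0 < L := by nlinarith
  have hsq : (W (γ 0) ^ (-(1 : ℝ) / 2)) ^ 2 = (W (γ 0))⁻¹ := by
    rw [← Real.rpow_natCast (W (γ 0) ^ (-(1 : ℝ) / 2)) 2, ← Real.rpow_mul hW0.le]
    norm_num [Real.rpow_neg_one]
  have h2 : (W (γ 0))⁻¹ ≤ (C * L / 2) ^ 2 := by
    rw [← hsq]
    have : (W (γ 0) ^ (-(1 : ℝ) / 2)) ^ 2 ≤ (C / 2 * L) ^ 2 := by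
      apply pow_le_pow_left₀ hrp0.le hmain
    calc (W (γ 0) ^ (-(1 : ℝ) / 2)) ^ 2 ≤ (C / 2 * L) ^ 2 := this
      _ = (C * L / 2) ^ 2 := by ring
    
  have hpart2 : 1 ≤ (C * L / 2) ^ 2 * W (γ 0) := by
    have := mul_le_mul_of_nonneg_right h2 hW0.le
    rwa [inv_mul_cancel₀ hW0.ne'] at this
  refine ⟨hmain, hpart2, fun _ => ?_⟩
  rw [div_le_iff₀ (by positivity)]
  nlinarith
end

section
/- For all u, v ∈ ℂ² one has Re Ω_I(u,v) = Re Ω_J(u,v). (This verifies, pointwise on the nondegenerate locus {z₁z₂ ≠ 0}, the compatibility condition Re(Ω_I) = Re(Ω_J) for the generalized Kähler structure on the standard Hopf surface of Example 2.5.) -/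
/-- (Example 2.5, standard Hopf surface.) Pointwise on the
nondegenerate locus `{z₁z₂ ≠ 0}`, the compatibility condition `Re Ω_I = Re Ω_J`
holds for the holomorphic symplectic forms of the generalized Kähler structure. -/
theorem hopf_re_compat (z1 z2 : ℂ) (hz1 : z1 ≠ 0) (hz2 : z2 ≠ 0)
    (ΩI ΩJ : ℂ × ℂ → ℂ × ℂ → ℂ)
    (hΩI : ∀ u v : ℂ × ℂ, ΩI u v = (u.1 * v.2 - u.2 * v.1) / (z1 * z2))
    (L : ℂ × ℂ → ℝ)
    (hL : ∀ u : ℂ × ℂ, L u =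
      2 * ((starRingEnd ℂ) z1 * u.1 + (starRingEnd ℂ) z2 * u.2).re
        / (‖z1‖ ^ 2 + ‖z2‖ ^ 2))
    (A B : ℂ × ℂ → ℂ)
    (hA : ∀ u : ℂ × ℂ, A u = (L u : ℂ) - (starRingEnd ℂ) u.2 / (starRingEnd ℂ) z2)
    (hB : ∀ u : ℂ × ℂ, B u = (L u : ℂ) - u.1 / z1)
    (hΩJ : ∀ u v : ℂ × ℂ, ΩJ u v = A u * B v - A v * B u) :
    ∀ u v : ℂ × ℂ, (ΩI u v).re = (ΩJ u v).re := by
  intro u v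
  set s1 : ℝ := ‖z1‖ ^ 2 with hs1
  set s2 : ℝ := ‖z2‖ ^ 2 with hs2
  have hs1' : (s1 : ℂ) = (starRingEnd ℂ) z1 * z1 := by
    show ((‖z1‖ ^ 2 : ℝ) : ℂ) = _
    rw [Complex.sq_norm, Complex.normSq_eq_conj_mul_self]
  have hs2' : (s2 : ℂ) = (starRingEnd ℂ) z2 * z2 := by
    show ((‖z2‖ ^ 2 : ℝ) : ℂ) = _
    rw [Complex.sq_norm, Complex.normSq_eq_conj_mul_self]
  have hS : s1 + s2 ≠ 0 := by
    have h1 : 0 < s1 := by rw [hs1]; have := norm_pos_iff.mpr hz1; positivity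
    have h2 : 0 ≤ s2 := by rw [hs2]; positivity
    linarith
  -- rewrite L in terms of the quotients w.1/z1 and w.2/z2
  have hL' : ∀ w : ℂ × ℂ,
      L w = 2 * (s1 * (w.1 / z1).re + s2 * (w.2 / z2).re) / (s1 + s2) := by
    intro w
    rw [hL]
    congr 1
    congr 1
    have e1 : (starRingEnd ℂ) z1 * w.1 = (s1 : ℂ) * (w.1 / z1) := by
      rw [hs1']; field_simp
    have e2 : (starRingEnd ℂ) z2 * w.2 = (s2 : ℂ) * (w.2 / z2) := by
      rw [hs2']; field_simp
    rw [e1, e2, Complex.add_re, Complex.re_ofReal_mul, Complex.re_ofReal_mul]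
  -- the conjugated quotient
  have hconj : ∀ w : ℂ × ℂ, (starRingEnd ℂ) w.2 / (starRingEnd ℂ) z2
      = (starRingEnd ℂ) (w.2 / z2) := by
    intro w; rw [map_div₀]
  -- abbreviations
  set bu := u.1 / z1 with hbu
  set eu := u.2 / z2 with heu
  set bv := v.1 / z1 with hbv
  set ev := v.2 / z2 with hev
  have hI : ΩI u v = bu * ev - bv * eu := by
    rw [hΩI, hbu, heu, hbv, hev]
    field_simp
  have hAu : A u = (L u : ℂ) - (starRingEnd ℂ) eu := by rw [hA, hconj]
  have hAv : A v = (L v : ℂ) - (starRingEnd ℂ) ev := by rw [hA, hconj]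
  have hBu : B u = (L u : ℂ) - bu := by rw [hB]
  have hBv : B v = (L v : ℂ) - bv := by rw [hB]
  rw [hI, hΩJ, hAu, hAv, hBu, hBv, hL' u, hL' v]
  simp only [Complex.sub_re, Complex.sub_im, Complex.mul_re, Complex.mul_im,
    Complex.ofReal_re, Complex.ofReal_im, Complex.conj_re, Complex.conj_im]
  field_simp
  ring
end

section
/- For every v ∈ ℂ²: Ω_I(X(z), v) = dμ₁(v) − i·dμ₂(v) and Ω_J(X(z), v) = dμ₁(v) − i·dμ₃(v), where dμ₁(v) := Im(v₁/z₁) − Im(v₂/z₂), dμ₂(v) := Re(v₁/z₁) − Re(v₂/z₂), and dμ₃(v) := Re(v₁/z₁) + Re(v₂/z₂) − 4·Re(conj(z₁)·v₁ + conj(z₂)·v₂)/(|z₁|² + |z₂|²). (These are the differentials of the moment map components μ₁ = arg z₁ − arg z₂, μ₂ = log(|z₁|/|z₂|), μ₃ = log(|z₁z₂|/(|z₁|²+|z₂|²)²) computed in Example 3.6 for the standard Hopf surface.) -/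
private lemma hopf_imc (w : ℂ) : (w.im : ℂ) = -(Complex.I * (w - (starRingEnd ℂ) w)) / 2 := by
  apply Complex.ext <;> simp

set_option maxHeartbeats 1000000 in
/-- (Example 3.6, standard Hopf surface.) Contracting the holomorphic
symplectic forms with the generator `X(z) = (i z₁, i z₂)` of the diagonal `S¹`-action
gives the differentials of the moment map components:
`Ω_I(X, ·) = dμ₁ - i dμ₂` and `Ω_J(X, ·) = dμ₁ - i dμ₃`. -/
theorem hopf_moment_map_differentials (z1 z2 : ℂ) (hz1 : z1 ≠ 0) (hz2 : z2 ≠ 0)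
    (X : ℂ × ℂ) (hX : X = (Complex.I * z1, Complex.I * z2))
    (ΩI ΩJ : ℂ × ℂ → ℂ × ℂ → ℂ)
    (hΩI : ∀ u v : ℂ × ℂ, ΩI u v = (u.1 * v.2 - u.2 * v.1) / (z1 * z2))
    (L : ℂ × ℂ → ℝ)
    (hL : ∀ u : ℂ × ℂ, L u =
      2 * ((starRingEnd ℂ) z1 * u.1 + (starRingEnd ℂ) z2 * u.2).re
        / (‖z1‖ ^ 2 + ‖z2‖ ^ 2))
    (A B : ℂ × ℂ → ℂ)
    (hA : ∀ u : ℂ × ℂ, A u = (L u : ℂ) - (starRingEnd ℂ) u.2 / (starRingEnd ℂ) z2)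
    (hB : ∀ u : ℂ × ℂ, B u = (L u : ℂ) - u.1 / z1)
    (hΩJ : ∀ u v : ℂ × ℂ, ΩJ u v = A u * B v - A v * B u)
    (dmu1 dmu2 dmu3 : ℂ × ℂ → ℝ)
    (hdmu1 : ∀ v : ℂ × ℂ, dmu1 v = (v.1 / z1).im - (v.2 / z2).im)
    (hdmu2 : ∀ v : ℂ × ℂ, dmu2 v = (v.1 / z1).re - (v.2 / z2).re)
    (hdmu3 : ∀ v : ℂ × ℂ, dmu3 v = (v.1 / z1).re + (v.2 / z2).re
      - 4 * ((starRingEnd ℂ) z1 * v.1 + (starRingEnd ℂ) z2 * v.2).re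
        / (‖z1‖ ^ 2 + ‖z2‖ ^ 2)) :
    ∀ v : ℂ × ℂ,
      ΩI X v = (dmu1 v : ℂ) - Complex.I * (dmu2 v : ℂ) ∧
      ΩJ X v = (dmu1 v : ℂ) - Complex.I * (dmu3 v : ℂ) := by
  intro v
  subst hX
  have hz1' : (starRingEnd ℂ) z1 ≠ 0 := by simpa using hz1
  have hz2' : (starRingEnd ℂ) z2 ≠ 0 := by simpa using hz2
  have hr0 : (‖z1‖ ^ 2 + ‖z2‖ ^ 2 : ℝ) ≠ 0 := by
    have h1 : 0 < ‖z1‖ := norm_pos_iff.mpr hz1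
    positivity
  have hrc : ((‖z1‖ ^ 2 + ‖z2‖ ^ 2 : ℝ) : ℂ) ≠ 0 :=
    Complex.ofReal_ne_zero.mpr hr0
  have hrc' : ((‖z1‖ : ℂ)) ^ 2 + ((‖z2‖ : ℂ)) ^ 2 ≠ 0 := by
    push_cast at hrc; exact hrc
  constructor
  · rw [hΩI, hdmu1, hdmu2]
    push_cast
    rw [hopf_imc, hopf_imc, Complex.re_eq_add_conj, Complex.re_eq_add_conj]
    simp only [map_div₀]
    field_simp
    ring_nf
    try simp only [Complex.I_sq]
    try ring
  · have hLX : L (Complex.I * z1, Complex.I * z2) = 0 := by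
      rw [hL]
      have : (starRingEnd ℂ) z1 * (Complex.I * z1) + (starRingEnd ℂ) z2 * (Complex.I * z2)
          = Complex.I * ((Complex.normSq z1 + Complex.normSq z2 : ℝ) : ℂ) := by
        push_cast
        rw [← Complex.mul_conj, ← Complex.mul_conj]
        ring
      rw [this]
      simp
    have hLv : (L v : ℂ) = (((starRingEnd ℂ) z1 * v.1 + (starRingEnd ℂ) z2 * v.2)
        + (starRingEnd ℂ) ((starRingEnd ℂ) z1 * v.1 + (starRingEnd ℂ) z2 * v.2))
          / ((‖z1‖ ^ 2 + ‖z2‖ ^ 2 : ℝ) : ℂ) := by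
      rw [hL]
      push_cast
      rw [Complex.re_eq_add_conj]
      ring
    rw [hΩJ, hA, hA, hB, hB, hdmu1, hdmu3, hLX, hLv]
    generalize hg : (‖z1‖ ^ 2 + ‖z2‖ ^ 2 : ℝ) = r at hrc ⊢
    push_cast
    rw [hopf_imc, hopf_imc, Complex.re_eq_add_conj, Complex.re_eq_add_conj,
      Complex.re_eq_add_conj]
    simp only [map_div₀, map_add, map_mul, Complex.conj_conj, Complex.conj_I,
      Complex.conj_ofReal]
    obtain ⟨p, hp⟩ : ∃ p, v.1 = z1 * p := ⟨v.1 / z1, by field_simp⟩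
    obtain ⟨q, hq⟩ : ∃ q, (starRingEnd ℂ) v.1 = (starRingEnd ℂ) z1 * q :=
      ⟨(starRingEnd ℂ) v.1 / (starRingEnd ℂ) z1, by field_simp⟩
    obtain ⟨s, hs⟩ : ∃ s, v.2 = z2 * s := ⟨v.2 / z2, by field_simp⟩
    obtain ⟨t, ht⟩ : ∃ t, (starRingEnd ℂ) v.2 = (starRingEnd ℂ) z2 * t :=
      ⟨(starRingEnd ℂ) v.2 / (starRingEnd ℂ) z2, by field_simp⟩
    rw [hq, ht, hp, hs]
    obtain ⟨u, hu⟩ : ∃ u, (starRingEnd ℂ) z1 * (z1 * p) + (starRingEnd ℂ) z2 * (z2 * s)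
        + (z1 * ((starRingEnd ℂ) z1 * q) + z2 * ((starRingEnd ℂ) z2 * t)) = (r : ℂ) * u :=
      ⟨((starRingEnd ℂ) z1 * (z1 * p) + (starRingEnd ℂ) z2 * (z2 * s)
        + (z1 * ((starRingEnd ℂ) z1 * q) + z2 * ((starRingEnd ℂ) z2 * t))) / (r : ℂ),
        by field_simp⟩
    rw [hu]
    field_simp
    ring
end
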